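/- Let C be a category with all finite limits and colimits which has splitting coproducts and disjoint coproducts, and in which binary products distribute over binary coproducts (for all objects A, B, C the canonical morphism (A ⨯ B) ⨿ (A ⨯ C) ⟶ A ⨯ (B ⨿ C) is an isomorphism). In the generalized cocore model structure, whose weak equivalences are W = {f : A ⟶ B | there exists some morphism B ⟶ A}, whose fibrations are Fib = (split monomorphisms).rlp, and whose cofibrations are Cof = (W ∩ Fib).llp, the pushout of a weak equivalence along a cofibration is a weak equivalence: given any pushout square with sides w : A ⟶ C in W and i : A ⟶ B in Cof, the induced morphism B ⟶ P opposite w lies in W (left properness). -/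

import Mathlib

open CategoryTheory CategoryTheory.Limits

universe v u

section Preliminaries

variable {C : Type u} [Category.{v} C]

/-- The right lifting class of a class of morphisms. -/
def MorphismPropertyRLP (S : MorphismProperty C) : MorphismProperty C :=
  fun _ _ g => ∀ ⦃A B : C⦄ (f : A ⟶ B), S f → HasLiftingProperty f g

/-- The left lifting class of a class of morphisms. -/
def MorphismPropertyLLP (S : MorphismProperty C) : MorphismProperty C :=
  fun _ _ f => ∀ ⦃X Y : C⦄ (g : X ⟶ Y), S g → HasLiftingProperty f g

/-- A category has splitting coproducts if every morphism into a binary coproduct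
is, up to isomorphism, a coproduct of two morphisms. -/
def HasSplittingCoproducts (C : Type u) [Category.{v} C] [HasBinaryCoproducts C] : Prop :=
  ∀ ⦃X A B : C⦄ (f : X ⟶ A ⨿ B), ∃ (XL XR : C) (fL : XL ⟶ A) (fR : XR ⟶ B)
    (φ : XL ⨿ XR ≅ X), φ.hom ≫ f = coprod.map fL fR

end Preliminaries

/-- In a finitely bicomplete category with splitting and disjoint coproducts in
which binary products distribute over binary coproducts, the generalized cocore
model structure is left proper: the pushout of a weak equivalence along a
cofibration is a weak equivalence. -/
theorem generalizedCocore_leftProper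
    {C : Type u} [Category.{v} C] [HasFiniteLimits C] [HasFiniteColimits C]
    (hsplit : HasSplittingCoproducts C) [∀ A B : C, BinaryCoproductDisjoint A B]
    (hdist : ∀ A B C' : C,
      IsIso (coprod.desc (prod.map (𝟙 A) coprod.inl) (prod.map (𝟙 A) coprod.inr) :
        (A ⨯ B) ⨿ (A ⨯ C') ⟶ A ⨯ (B ⨿ C')))
    (W Fib Cof : MorphismProperty C)
    (hW : W = fun A B _ => Nonempty (B ⟶ A))
    (hFib : Fib = MorphismPropertyRLP (fun _ _ f => IsSplitMono f))
    (hCof : Cof = MorphismPropertyLLP (fun _ _ f => W f ∧ Fib f)) :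
    ∀ ⦃A B C' P : C⦄ (w : A ⟶ C') (i : A ⟶ B) (h : C' ⟶ P) (k : B ⟶ P),
      IsPushout w i h k → W w → Cof i → W k := by
  subst hW hFib hCof
  intro A B C' P w i h k hpo hw hi
  obtain ⟨r⟩ := hw
  -- prod.snd : B ⨯ B ⟶ B is a fibration
  have hfib : MorphismPropertyRLP (fun _ _ f => IsSplitMono f) (prod.snd : B ⨯ B ⟶ B) := by
    intro U V m hm
    constructor
    intro u v sq
    refine ⟨⟨⟨prod.lift (retraction m ≫ u ≫ prod.fst) v, ?_, ?_⟩⟩⟩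
    · apply Limits.prod.hom_ext
      · rw [Category.assoc]; erw [prod.lift_fst]; simp
      · rw [Category.assoc]; erw [prod.lift_snd]; simpa using sq.w.symm
    · erw [prod.lift_snd]
  have hlp : HasLiftingProperty i (prod.snd : B ⨯ B ⟶ B) :=
    hi (prod.snd : B ⨯ B ⟶ B) ⟨⟨prod.lift (𝟙 B) (𝟙 B)⟩, hfib⟩
  have sq : CommSq (prod.lift (w ≫ r ≫ i) i) i (prod.snd : B ⨯ B ⟶ B) (𝟙 B) :=
    ⟨by erw [prod.lift_snd]; simp⟩
  obtain ⟨⟨⟨l, hl, -⟩⟩⟩ := hlp.sq_hasLift sq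
  refine ⟨hpo.desc (r ≫ i) (l ≫ prod.fst) ?_⟩
  have : i ≫ l ≫ prod.fst = (i ≫ l) ≫ prod.fst := by rw [Category.assoc]
  rw [this, hl]
  erw [prod.lift_fst]
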